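/- (Theorem 2.2) Given a nonempty complete metric space (X, d) and an IIFS (f_i)_{i∈I} on X, there exists a unique nonempty bounded closed subset A(S) of X such that closure(⋃_{i∈I} f_i(A(S))) = A(S). -/

import Mathlib

open scoped ENNReal NNReal
open Filter Topology

open EMetric Metric Set TopologicalSpace in
private lemma lip_infEDist_le {X : Type*} [MetricSpace X] {c : ℝ≥0} (hc0 : c ≠ 0)
    {g : X → X} (h : LipschitzWith c g) (a : X) (t : Set X) :
    infEDist (g a) (g '' t) ≤ (c : ℝ≥0∞) * infEDist a t := by
  have : infEDist (g a) (g '' t) ≤ ⨅ b ∈ t, (c : ℝ≥0∞) * edist a b :=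
    le_iInf₂ fun b hb => (infEDist_le_edist_of_mem (mem_image_of_mem g hb)).trans (h a b)
  refine this.trans_eq ?_
  rw [infEDist]
  simp_rw [ENNReal.mul_iInf_of_ne (by exact_mod_cast hc0) ENNReal.coe_ne_top]

open EMetric Metric Set TopologicalSpace in
private lemma iifs_union_contract {X : Type*} [MetricSpace X] {I : Type*}
    (f : I → X → X) {c : ℝ≥0} (hc0 : c ≠ 0) (hlip : ∀ i : I, LipschitzWith c (f i))
    (s t : Set X) :
    hausdorffEDist (⋃ i : I, f i '' s) (⋃ i : I, f i '' t)
      ≤ (c : ℝ≥0∞) * hausdorffEDist s t := by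
  have key : ∀ s t : Set X, ∀ x ∈ ⋃ i : I, f i '' s,
      infEDist x (⋃ i : I, f i '' t) ≤ (c : ℝ≥0∞) * hausdorffEDist s t := by
    intro s t x hx
    obtain ⟨i, a, ha, rfl⟩ := by simpa using hx
    calc infEDist (f i a) (⋃ j : I, f j '' t)
        ≤ infEDist (f i a) (f i '' t) := infEDist_anti (subset_iUnion (fun j => f j '' t) i)
      _ ≤ (c : ℝ≥0∞) * infEDist a t := lip_infEDist_le hc0 (hlip i) a t
      _ ≤ (c : ℝ≥0∞) * hausdorffEDist s t :=
          mul_le_mul_right (infEDist_le_hausdorffEDist_of_mem ha) _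
  refine hausdorffEDist_le_of_infEDist (key s t) fun y hy => ?_
  rw [hausdorffEDist_comm]
  exact key t s y hy

/-- Theorem 2.2. Every IIFS `(f_i)_{i ∈ I}` on a nonempty complete metric
space `X` has a unique attractor: a nonempty bounded closed set `Att ⊆ X` with
`closure (⋃ i, f_i '' Att) = Att`. -/
theorem iifs_attractor_existsUnique {X : Type*} [MetricSpace X] [CompleteSpace X] [Nonempty X]
    {I : Type*} [Nonempty I] (f : I → X → X) (c : ℝ≥0) (hc : c < 1)
    (hlip : ∀ i : I, LipschitzWith c (f i))
    (hbdd : ∀ B : Set X, Bornology.IsBounded B → Bornology.IsBounded (⋃ i : I, f i '' B)) :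
    ∃! Att : Set X, Att.Nonempty ∧ Bornology.IsBounded Att ∧ IsClosed Att ∧
      closure (⋃ i : I, f i '' Att) = Att := by
  classical
  -- replace `c` by a nonzero contraction constant
  set c' : ℝ≥0 := max c (1/2) with hc'
  have hc'0 : c' ≠ 0 := by
    intro h
    have : (1/2 : ℝ≥0) ≤ c' := le_max_right _ _
    rw [h] at this
    norm_num at this
  have hc'1 : c' < 1 := max_lt hc (by rw [← NNReal.coe_lt_coe]; norm_num)
  have hlip' : ∀ i : I, LipschitzWith c' (f i) :=
    fun i => (hlip i).weaken (le_max_left _ _)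
  -- the contraction on the complete space of closed subsets
  set F : TopologicalSpace.Closeds X → TopologicalSpace.Closeds X :=
    fun S => ⟨closure (⋃ i : I, f i '' (S : Set X)), isClosed_closure⟩ with hF
  have hFedist : ∀ S T : TopologicalSpace.Closeds X,
      edist (F S) (F T) ≤ (c' : ℝ≥0∞) * edist S T := by
    intro S T
    have : edist (F S) (F T)
        = Metric.hausdorffEDist (⋃ i : I, f i '' (S : Set X)) (⋃ i : I, f i '' (T : Set X)) := by
      rw [TopologicalSpace.Closeds.edist_eq]
      exact Metric.hausdorffEDist_closure
    rw [this, TopologicalSpace.Closeds.edist_eq]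
    exact iifs_union_contract f hc'0 hlip' _ _
  have hcontr : ContractingWith c' F :=
    ⟨hc'1, fun S T => hFedist S T⟩
  -- starting point: a singleton
  obtain ⟨x₀⟩ := ‹Nonempty X›
  set S₀ : TopologicalSpace.Closeds X := ⟨{x₀}, isClosed_singleton⟩ with hS₀
  have hS₀bdd : Bornology.IsBounded ({x₀} : Set X) := Bornology.isBounded_singleton
  have hFS₀bdd : Bornology.IsBounded ((F S₀ : Set X)) :=
    (hbdd _ hS₀bdd).closure
  have hFS₀ne : (F S₀ : Set X).Nonempty := by
    refine closure_nonempty_iff.2 ?_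
    obtain ⟨i⟩ := ‹Nonempty I›
    exact ⟨f i x₀, Set.mem_iUnion.2 ⟨i, Set.mem_image_of_mem _ rfl⟩⟩
  have hdist₀ : edist S₀ (F S₀) ≠ ∞ := by
    rw [TopologicalSpace.Closeds.edist_eq]
    exact Metric.hausdorffEDist_ne_top_of_nonempty_of_bounded
      (Set.singleton_nonempty x₀) hFS₀ne hS₀bdd hFS₀bdd
  -- the fixed point
  set A : TopologicalSpace.Closeds X := ContractingWith.efixedPoint F hcontr S₀ hdist₀ with hA
  have hAfix : F A = A := hcontr.efixedPoint_isFixedPt hdist₀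
  have hAdist : edist S₀ A ≠ ∞ := (hcontr.edist_efixedPoint_lt_top hdist₀).ne
  have hAH : Metric.hausdorffEDist ({x₀} : Set X) (A : Set X) ≠ ∞ := by
    rwa [TopologicalSpace.Closeds.edist_eq] at hAdist
  have hAne : (A : Set X).Nonempty :=
    Metric.nonempty_of_hausdorffEDist_ne_top (Set.singleton_nonempty x₀) hAH
  have hAbdd : Bornology.IsBounded (A : Set X) := by
    rw [Metric.isBounded_iff_ediam_ne_top]
    have hdiam : Metric.ediam (A : Set X)
        ≤ 2 * Metric.hausdorffEDist ({x₀} : Set X) (A : Set X) := by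
      apply Metric.ediam_le
      intro a ha b hb
      have h1 : edist a x₀ ≤ Metric.hausdorffEDist ({x₀} : Set X) (A : Set X) := by
        have := Metric.infEDist_le_hausdorffEDist_of_mem (t := ({x₀} : Set X)) ha
        rwa [Metric.infEDist_singleton, Metric.hausdorffEDist_comm] at this
      have h2 : edist x₀ b ≤ Metric.hausdorffEDist ({x₀} : Set X) (A : Set X) := by
        have := Metric.infEDist_le_hausdorffEDist_of_mem (t := ({x₀} : Set X)) hb
        rw [Metric.infEDist_singleton] at this
        rwa [edist_comm, Metric.hausdorffEDist_comm] at this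
      calc edist a b ≤ edist a x₀ + edist x₀ b := edist_triangle _ _ _
        _ ≤ _ + _ := add_le_add h1 h2
        _ = 2 * Metric.hausdorffEDist ({x₀} : Set X) (A : Set X) := (two_mul _).symm
    intro h
    rw [h] at hdiam
    exact hAH (by simpa [ENNReal.mul_eq_top] using top_le_iff.1 hdiam)
  refine ⟨(A : Set X), ⟨hAne, hAbdd, A.isClosed, ?_⟩, ?_⟩
  · have := congrArg (fun S : TopologicalSpace.Closeds X => (S : Set X)) hAfix
    exact this
  · rintro B ⟨hBne, hBbdd, hBcl, hBfix⟩
    set B' : TopologicalSpace.Closeds X := ⟨B, hBcl⟩ with hB'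
    have hB'fix : F B' = B' := TopologicalSpace.Closeds.ext hBfix
    have hfin : edist B' A ≠ ∞ := by
      rw [TopologicalSpace.Closeds.edist_eq]
      exact Metric.hausdorffEDist_ne_top_of_nonempty_of_bounded hBne hAne hBbdd hAbdd
    have hle : edist B' A ≤ (c' : ℝ≥0∞) * edist B' A := by
      calc edist B' A = edist (F B') (F A) := by rw [hB'fix, hAfix]
        _ ≤ (c' : ℝ≥0∞) * edist B' A := hFedist _ _
    have hzero : edist B' A = 0 := by
      by_contra h
      have hlt : (c' : ℝ≥0∞) * edist B' A < 1 * edist B' A := by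
        refine ENNReal.mul_lt_mul_iff_left h hfin |>.2 ?_
        exact_mod_cast hc'1
      rw [one_mul] at hlt
      exact absurd (hle.trans_lt hlt) (lt_irrefl _)
    have : B' = A := edist_eq_zero.1 hzero
    exact congrArg (fun S : TopologicalSpace.Closeds X => (S : Set X)) this
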